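/- Let σ₁ < σ₂ be real numbers, let q : ℝ → ℝ be continuous, and let u, v : ℝ → ℝ be twice continuously differentiable functions satisfying u'' + q·u = 0 and v'' + q·v = 0 on (σ₁,σ₂), whose Wronskian u·v' − u'·v is equal to a constant W > 0 on (σ₁,σ₂). Then there exists a constant C ∈ ℝ such that, defining ψ(t) = C + ∫_{σ₁}^{t} W/((u(s))² + (v(s))²) ds, one has u(t) = √W · cos(ψ(t))/√(ψ'(t)) and v(t) = √W · sin(ψ(t))/√(ψ'(t)) for every t ∈ (σ₁,σ₂). -/

import Mathlib

open Real Set MeasureTheory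

set_option maxHeartbeats 1600000 in
theorem solutions_representable_by_phase_function (σ₁ σ₂ : ℝ) (hσ : σ₁ < σ₂)
    (q u v : ℝ → ℝ) (hq : Continuous q)
    (hu : ContDiffOn ℝ 2 u (Ioo σ₁ σ₂)) (hv : ContDiffOn ℝ 2 v (Ioo σ₁ σ₂))
    (hueq : ∀ t ∈ Ioo σ₁ σ₂, deriv (deriv u) t + q t * u t = 0)
    (hveq : ∀ t ∈ Ioo σ₁ σ₂, deriv (deriv v) t + q t * v t = 0)
    (W : ℝ) (hW : 0 < W)
    (hwronsk : ∀ t ∈ Ioo σ₁ σ₂, u t * deriv v t - deriv u t * v t = W) :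
    ∃ C : ℝ, ∀ t ∈ Ioo σ₁ σ₂,
      u t = Real.sqrt W *
          Real.cos (C + ∫ s in σ₁..t, W / ((u s) ^ 2 + (v s) ^ 2)) /
          Real.sqrt (deriv (fun x => C + ∫ s in σ₁..x, W / ((u s) ^ 2 + (v s) ^ 2)) t) ∧
      v t = Real.sqrt W *
          Real.sin (C + ∫ s in σ₁..t, W / ((u s) ^ 2 + (v s) ^ 2)) /
          Real.sqrt (deriv (fun x => C + ∫ s in σ₁..x, W / ((u s) ^ 2 + (v s) ^ 2)) t) := by
  have hSo : IsOpen (Ioo σ₁ σ₂) := isOpen_Ioo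
  -- basic differentiability facts
  have hu' : ∀ t ∈ Ioo σ₁ σ₂, HasDerivAt u (deriv u t) t := fun t ht =>
    ((hu.differentiableOn (by norm_num)).differentiableAt (hSo.mem_nhds ht)).hasDerivAt
  have hv' : ∀ t ∈ Ioo σ₁ σ₂, HasDerivAt v (deriv v t) t := fun t ht =>
    ((hv.differentiableOn (by norm_num)).differentiableAt (hSo.mem_nhds ht)).hasDerivAt
  have hu1 : ContDiffOn ℝ 1 (deriv u) (Ioo σ₁ σ₂) := hu.deriv_of_isOpen hSo (by norm_num)
  have hv1 : ContDiffOn ℝ 1 (deriv v) (Ioo σ₁ σ₂) := hv.deriv_of_isOpen hSo (by norm_num)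
  have hu'' : ∀ t ∈ Ioo σ₁ σ₂, HasDerivAt (deriv u) (deriv (deriv u) t) t := fun t ht =>
    ((hu1.differentiableOn (by norm_num)).differentiableAt (hSo.mem_nhds ht)).hasDerivAt
  have hv'' : ∀ t ∈ Ioo σ₁ σ₂, HasDerivAt (deriv v) (deriv (deriv v) t) t := fun t ht =>
    ((hv1.differentiableOn (by norm_num)).differentiableAt (hSo.mem_nhds ht)).hasDerivAt
  have huc : ContinuousOn u (Ioo σ₁ σ₂) := hu.continuousOn
  have hvc : ContinuousOn v (Ioo σ₁ σ₂) := hv.continuousOn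
  -- positivity of u^2+v^2
  have hr2pos : ∀ t ∈ Ioo σ₁ σ₂, 0 < u t ^ 2 + v t ^ 2 := by
    intro t ht
    rcases lt_or_eq_of_le (by positivity : (0:ℝ) ≤ u t ^ 2 + v t ^ 2) with h | h
    · exact h
    · exfalso
      have hu0 : u t = 0 := by nlinarith [sq_nonneg (u t), sq_nonneg (v t)]
      have hv0 : v t = 0 := by nlinarith [sq_nonneg (u t), sq_nonneg (v t)]
      have := hwronsk t ht
      rw [hu0, hv0] at this
      simp at this
      linarith
  -- bound on q
  obtain ⟨M, hM⟩ := (isCompact_Icc (a := σ₁) (b := σ₂)).exists_bound_of_continuousOn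
    hq.continuousOn
  have hM0 : 0 ≤ M := le_trans (norm_nonneg _) (hM σ₁ (left_mem_Icc.2 hσ.le))
  set L : ℝ := 1 + M with hLdef
  have hL0 : 0 < L := by positivity
  -- the "energy" h and its exponential damping is monotone
  set h : ℝ → ℝ := fun s => u s ^ 2 + deriv u s ^ 2 + v s ^ 2 + deriv v s ^ 2 with hhdef
  set φ : ℝ → ℝ := fun s => h s * Real.exp (L * s) with hφdef
  have hhd : ∀ t ∈ Ioo σ₁ σ₂,
      HasDerivAt h (2 * (1 - q t) * (u t * deriv u t + v t * deriv v t)) t := by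
    intro t ht
    have h1 : HasDerivAt (fun s => u s ^ 2) (2 * u t * deriv u t) t := by
      simpa using (hu' t ht).fun_pow 2
    have h2 : HasDerivAt (fun s => deriv u s ^ 2) (2 * deriv u t * deriv (deriv u) t) t := by
      simpa using (hu'' t ht).fun_pow 2
    have h3 : HasDerivAt (fun s => v s ^ 2) (2 * v t * deriv v t) t := by
      simpa using (hv' t ht).fun_pow 2
    have h4 : HasDerivAt (fun s => deriv v s ^ 2) (2 * deriv v t * deriv (deriv v) t) t := by
      simpa using (hv'' t ht).fun_pow 2
    have := ((h1.fun_add h2).fun_add h3).fun_add h4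
    rw [hhdef]
    refine this.congr_deriv ?_
    have e1 := hueq t ht
    have e2 := hveq t ht
    have eu : deriv (deriv u) t = -(q t * u t) := by linarith
    have ev : deriv (deriv v) t = -(q t * v t) := by linarith
    rw [eu, ev]; ring
  have hφd : ∀ t ∈ Ioo σ₁ σ₂,
      HasDerivAt φ ((2 * (1 - q t) * (u t * deriv u t + v t * deriv v t) + L * h t)
        * Real.exp (L * t)) t := by
    intro t ht
    have he : HasDerivAt (fun s => Real.exp (L * s)) (Real.exp (L * t) * (L * 1)) t :=
      ((hasDerivAt_id t).const_mul L).exp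
    have := (hhd t ht).fun_mul he
    rw [hφdef]
    refine this.congr_deriv ?_
    ring
  have hφderiv_nonneg : ∀ t ∈ Ioo σ₁ σ₂, 0 ≤ deriv φ t := by
    intro t ht
    rw [(hφd t ht).deriv]
    have hqt : |q t| ≤ M := by
      have := hM t (Ioo_subset_Icc_self ht)
      simpa [Real.norm_eq_abs] using this
    have h1 : q t ≤ M := (abs_le.1 hqt).2
    have h2 : -M ≤ q t := (abs_le.1 hqt).1
    have hexp : 0 < Real.exp (L * t) := Real.exp_pos _
    apply mul_nonneg _ hexp.le
    rw [show h t = u t ^ 2 + deriv u t ^ 2 + v t ^ 2 + deriv v t ^ 2 from rfl, hLdef]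
    nlinarith [mul_nonneg (by linarith : (0:ℝ) ≤ M - q t) (sq_nonneg (u t - deriv u t)),
      mul_nonneg (by linarith : (0:ℝ) ≤ M - q t) (sq_nonneg (v t - deriv v t)),
      mul_nonneg (by linarith : (0:ℝ) ≤ M + q t) (sq_nonneg (u t + deriv u t)),
      mul_nonneg (by linarith : (0:ℝ) ≤ M + q t) (sq_nonneg (v t + deriv v t)),
      sq_nonneg (u t + deriv u t), sq_nonneg (u t - deriv u t),
      sq_nonneg (v t + deriv v t), sq_nonneg (v t - deriv v t)]
  have hφmono : MonotoneOn φ (Ioo σ₁ σ₂) := by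
    apply monotoneOn_of_deriv_nonneg (convex_Ioo σ₁ σ₂)
    · intro t ht
      exact (hφd t ht).continuousAt.continuousWithinAt
    · rw [hSo.interior_eq]
      intro t ht
      exact (hφd t ht).differentiableAt.differentiableWithinAt
    · rw [hSo.interior_eq]
      exact hφderiv_nonneg
  -- lower bound for u^2+v^2 on (σ₁, x]
  have hlow : ∀ x ∈ Ioo σ₁ σ₂, ∃ c > 0, ∀ t ∈ Ioc σ₁ x, c ≤ u t ^ 2 + v t ^ 2 := by
    intro x hx
    have hhx : 0 < h x := by
      rw [show h x = u x ^ 2 + deriv u x ^ 2 + v x ^ 2 + deriv v x ^ 2 from rfl]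
      nlinarith [hr2pos x hx, sq_nonneg (deriv u x), sq_nonneg (deriv v x)]
    set K : ℝ := h x * Real.exp (L * (x - σ₁)) with hKdef
    have hK0 : 0 < K := by positivity
    refine ⟨W ^ 2 / K, by positivity, ?_⟩
    intro t ht
    have htS : t ∈ Ioo σ₁ σ₂ := ⟨ht.1, lt_of_le_of_lt ht.2 hx.2⟩
    have hφle : φ t ≤ φ x := by
      apply hφmono htS hx ht.2
    have hhle : h t ≤ K := by
      have hexpt : 0 < Real.exp (L * t) := Real.exp_pos _
      rw [hφdef] at hφle
      simp only at hφle
      have : h t ≤ h x * Real.exp (L * x) / Real.exp (L * t) := by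
        rw [le_div_iff₀ hexpt]; exact hφle
      calc h t ≤ h x * Real.exp (L * x) / Real.exp (L * t) := this
        _ = h x * Real.exp (L * x - L * t) := by
            rw [Real.exp_sub]; ring
        _ ≤ K := by
            rw [hKdef]
            apply mul_le_mul_of_nonneg_left _ hhx.le
            apply Real.exp_le_exp.2
            nlinarith [ht.1]
    -- Cauchy-Schwarz: W^2 ≤ (u^2+v^2) * h
    have hw := hwronsk t htS
    rw [div_le_iff₀ hK0]
    have hht : 0 ≤ h t := by
      rw [show h t = u t ^ 2 + deriv u t ^ 2 + v t ^ 2 + deriv v t ^ 2 from rfl]; positivity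
    have hCS : W ^ 2 ≤ (u t ^ 2 + v t ^ 2) * h t := by
      rw [show h t = u t ^ 2 + deriv u t ^ 2 + v t ^ 2 + deriv v t ^ 2 from rfl]
      nlinarith [sq_nonneg (u t * deriv u t + v t * deriv v t), sq_nonneg (u t * v t),
        sq_nonneg (u t * deriv v t - deriv u t * v t)]
    calc W ^ 2 ≤ (u t ^ 2 + v t ^ 2) * h t := hCS
      _ ≤ (u t ^ 2 + v t ^ 2) * K := by
          apply mul_le_mul_of_nonneg_left hhle (by positivity)
  -- continuity of the integrand
  have hfcont : ContinuousOn (fun s => W / (u s ^ 2 + v s ^ 2)) (Ioo σ₁ σ₂) := by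
    apply ContinuousOn.div continuousOn_const
    · exact ((huc.pow 2).add (hvc.pow 2))
    · intro t ht; exact (hr2pos t ht).ne'
  -- integrability
  have hInt : ∀ x ∈ Ioo σ₁ σ₂,
      IntervalIntegrable (fun s => W / (u s ^ 2 + v s ^ 2)) volume σ₁ x := by
    intro x hx
    obtain ⟨c, hc0, hc⟩ := hlow x hx
    rw [intervalIntegrable_iff_integrableOn_Ioc_of_le hx.1.le]
    rw [integrableOn_Ioc_iff_integrableOn_Ioo]
    have hsub : Ioo σ₁ x ⊆ Ioo σ₁ σ₂ := Ioo_subset_Ioo le_rfl hx.2.le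
    apply MeasureTheory.Integrable.mono' (g := fun _ => W / c)
    · exact integrableOn_const measure_Ioo_lt_top.ne
    · exact (hfcont.mono hsub).aestronglyMeasurable measurableSet_Ioo
    · apply (ae_restrict_iff' measurableSet_Ioo).2
      apply ae_of_all
      intro a ha
      have hca : c ≤ u a ^ 2 + v a ^ 2 := hc a ⟨ha.1, ha.2.le⟩
      have hra : 0 < u a ^ 2 + v a ^ 2 := lt_of_lt_of_le hc0 hca
      rw [Real.norm_eq_abs, abs_of_nonneg (by positivity)]
      exact div_le_div_of_nonneg_left hW.le hc0 hca
  -- base point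
  set t₀ : ℝ := (σ₁ + σ₂) / 2 with ht₀def
  have ht₀ : t₀ ∈ Ioo σ₁ σ₂ := ⟨by rw [ht₀def]; linarith, by rw [ht₀def]; linarith⟩
  set z₀ : ℂ := (u t₀ : ℂ) + (v t₀ : ℂ) * Complex.I with hz₀def
  have hz₀re : z₀.re = u t₀ := by simp [hz₀def]
  have hz₀im : z₀.im = v t₀ := by simp [hz₀def]
  have hz₀ne : z₀ ≠ 0 := by
    intro h0
    have h1 : u t₀ = 0 := by rw [← hz₀re, h0]; simp
    have h2 : v t₀ = 0 := by rw [← hz₀im, h0]; simp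
    have := hr2pos t₀ ht₀
    rw [h1, h2] at this; norm_num at this
  have habs : ‖z₀‖ = Real.sqrt (u t₀ ^ 2 + v t₀ ^ 2) := by
    rw [Complex.norm_def, Complex.normSq_apply, hz₀re, hz₀im]
    congr 1; ring
  set θ₀ : ℝ := z₀.arg with hθ₀def
  have hcos0 : Real.cos θ₀ = u t₀ / ‖z₀‖ := by
    rw [hθ₀def, ← hz₀re]; exact Complex.cos_arg hz₀ne
  have hsin0 : Real.sin θ₀ = v t₀ / ‖z₀‖ := by
    rw [hθ₀def, ← hz₀im]; exact Complex.sin_arg z₀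
  set C : ℝ := θ₀ - ∫ s in σ₁..t₀, W / (u s ^ 2 + v s ^ 2) with hCdef
  refine ⟨C, ?_⟩
  set ψ : ℝ → ℝ := fun x => C + ∫ s in σ₁..x, W / (u s ^ 2 + v s ^ 2) with hψdef
  have hψt₀ : ψ t₀ = θ₀ := by
    rw [show ψ t₀ = C + ∫ s in σ₁..t₀, W / (u s ^ 2 + v s ^ 2) from rfl, hCdef]; ring
  have hψ' : ∀ t ∈ Ioo σ₁ σ₂, HasDerivAt ψ (W / (u t ^ 2 + v t ^ 2)) t := by
    intro t ht
    have h1 := intervalIntegral.integral_hasDerivAt_right (hInt t ht)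
      (ContinuousOn.stronglyMeasurableAtFilter hSo hfcont t ht)
      (hfcont.continuousAt (hSo.mem_nhds ht))
    exact h1.const_add C
  -- the rotated coordinates
  set A : ℝ → ℝ := fun s => u s * Real.cos (ψ s) + v s * Real.sin (ψ s) with hAdef
  set B : ℝ → ℝ := fun s => v s * Real.cos (ψ s) - u s * Real.sin (ψ s) with hBdef
  have hAd : ∀ t ∈ Ioo σ₁ σ₂, HasDerivAt A
      ((u t * deriv u t + v t * deriv v t) / (u t ^ 2 + v t ^ 2) * A t) t := by
    intro t ht
    have hw := hwronsk t ht
    have hr := hr2pos t ht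
    have hd := ((hu' t ht).fun_mul ((hψ' t ht).cos)).fun_add ((hv' t ht).fun_mul ((hψ' t ht).sin))
    refine hd.congr_deriv ?_
    rw [show A t = u t * Real.cos (ψ t) + v t * Real.sin (ψ t) from rfl, ← hw]
    field_simp
    ring
  have hBd : ∀ t ∈ Ioo σ₁ σ₂, HasDerivAt B
      ((u t * deriv u t + v t * deriv v t) / (u t ^ 2 + v t ^ 2) * B t) t := by
    intro t ht
    have hw := hwronsk t ht
    have hr := hr2pos t ht
    have hd := ((hv' t ht).fun_mul ((hψ' t ht).cos)).fun_sub ((hu' t ht).fun_mul ((hψ' t ht).sin))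
    refine hd.congr_deriv ?_
    rw [show B t = v t * Real.cos (ψ t) - u t * Real.sin (ψ t) from rfl, ← hw]
    field_simp
    ring
  have hr2d : ∀ t ∈ Ioo σ₁ σ₂, HasDerivAt (fun s => u s ^ 2 + v s ^ 2)
      (2 * u t * deriv u t + 2 * v t * deriv v t) t := by
    intro t ht
    have h1 : HasDerivAt (fun s => u s ^ 2) (2 * u t * deriv u t) t := by
      simpa using (hu' t ht).fun_pow 2
    have h3 : HasDerivAt (fun s => v s ^ 2) (2 * v t * deriv v t) t := by
      simpa using (hv' t ht).fun_pow 2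
    exact h1.add h3
  set Kf : ℝ → ℝ := fun s => B s ^ 2 / (u s ^ 2 + v s ^ 2) with hKfdef
  have hKd : ∀ t ∈ Ioo σ₁ σ₂, HasDerivAt Kf 0 t := by
    intro t ht
    have hr := hr2pos t ht
    have hd := ((hBd t ht).fun_pow 2).fun_div (hr2d t ht) hr.ne'
    refine hd.congr_deriv ?_
    field_simp
    ring
  have hKmono : MonotoneOn Kf (Ioo σ₁ σ₂) := by
    apply monotoneOn_of_deriv_nonneg (convex_Ioo σ₁ σ₂)
    · exact fun t ht => (hKd t ht).continuousAt.continuousWithinAt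
    · rw [hSo.interior_eq]
      exact fun t ht => (hKd t ht).differentiableAt.differentiableWithinAt
    · rw [hSo.interior_eq]
      exact fun t ht => le_of_eq ((hKd t ht).deriv).symm
  have hKanti : AntitoneOn Kf (Ioo σ₁ σ₂) := by
    apply antitoneOn_of_deriv_nonpos (convex_Ioo σ₁ σ₂)
    · exact fun t ht => (hKd t ht).continuousAt.continuousWithinAt
    · rw [hSo.interior_eq]
      exact fun t ht => (hKd t ht).differentiableAt.differentiableWithinAt
    · rw [hSo.interior_eq]
      exact fun t ht => le_of_eq ((hKd t ht).deriv)
  have hKconst : ∀ t ∈ Ioo σ₁ σ₂, Kf t = Kf t₀ := by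
    intro t ht
    rcases le_total t t₀ with hle | hle
    · exact le_antisymm (hKmono ht ht₀ hle) (hKanti ht ht₀ hle)
    · exact le_antisymm (hKanti ht₀ ht hle) (hKmono ht₀ ht hle)
  have hBt₀ : B t₀ = 0 := by
    rw [show B t₀ = v t₀ * Real.cos (ψ t₀) - u t₀ * Real.sin (ψ t₀) from rfl, hψt₀, hcos0, hsin0]
    ring
  have hB0 : ∀ t ∈ Ioo σ₁ σ₂, B t = 0 := by
    intro t ht
    have hr := hr2pos t ht
    have h1 : B t ^ 2 / (u t ^ 2 + v t ^ 2) = 0 := by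
      rw [show B t ^ 2 / (u t ^ 2 + v t ^ 2) = Kf t from rfl, hKconst t ht,
        show Kf t₀ = B t₀ ^ 2 / (u t₀ ^ 2 + v t₀ ^ 2) from rfl, hBt₀]
      simp
    field_simp at h1
    simpa using h1
  have hA2 : ∀ t ∈ Ioo σ₁ σ₂, A t ^ 2 = u t ^ 2 + v t ^ 2 := by
    intro t ht
    have hb := hB0 t ht
    rw [show B t = v t * Real.cos (ψ t) - u t * Real.sin (ψ t) from rfl] at hb
    rw [show A t = u t * Real.cos (ψ t) + v t * Real.sin (ψ t) from rfl]
    have hsc := Real.sin_sq_add_cos_sq (ψ t)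
    linear_combination (u t ^ 2 + v t ^ 2) * hsc -
      (v t * Real.cos (ψ t) - u t * Real.sin (ψ t)) * hb
  have hAt₀ : 0 < A t₀ := by
    rw [show A t₀ = u t₀ * Real.cos (ψ t₀) + v t₀ * Real.sin (ψ t₀) from rfl, hψt₀,
      hcos0, hsin0, habs]
    have hr := hr2pos t₀ ht₀
    have hs : 0 < Real.sqrt (u t₀ ^ 2 + v t₀ ^ 2) := Real.sqrt_pos.2 hr
    have : u t₀ * (u t₀ / Real.sqrt (u t₀ ^ 2 + v t₀ ^ 2)) +
        v t₀ * (v t₀ / Real.sqrt (u t₀ ^ 2 + v t₀ ^ 2)) =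
        (u t₀ ^ 2 + v t₀ ^ 2) / Real.sqrt (u t₀ ^ 2 + v t₀ ^ 2) := by
      field_simp
    rw [this]
    positivity
  have hApos : ∀ t ∈ Ioo σ₁ σ₂, 0 < A t := by
    intro t ht
    by_contra hc
    push_neg at hc
    have hne : A t ≠ 0 := by
      intro h0
      have h2 := hA2 t ht
      rw [h0] at h2
      have := hr2pos t ht
      nlinarith
    have hlt : A t < 0 := lt_of_le_of_ne hc hne
    have hsub : uIcc t t₀ ⊆ Ioo σ₁ σ₂ := by
      intro x hx
      rcases mem_uIcc.1 hx with ⟨h1, h2⟩ | ⟨h1, h2⟩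
      · exact ⟨lt_of_lt_of_le ht.1 h1, lt_of_le_of_lt h2 ht₀.2⟩
      · exact ⟨lt_of_lt_of_le ht₀.1 h1, lt_of_le_of_lt h2 ht.2⟩
    have hcont : ContinuousOn A (uIcc t t₀) := fun x hx =>
      ((hAd x (hsub hx)).differentiableAt.continuousAt).continuousWithinAt
    have h0m : (0:ℝ) ∈ uIcc (A t) (A t₀) := by
      rw [Set.mem_uIcc]; left; exact ⟨hlt.le, hAt₀.le⟩
    obtain ⟨c, hcmem, hc0⟩ := intermediate_value_uIcc hcont h0m
    have h2 := hA2 c (hsub hcmem)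
    rw [hc0] at h2
    have := hr2pos c (hsub hcmem)
    nlinarith
  have hAval : ∀ t ∈ Ioo σ₁ σ₂, A t = Real.sqrt (u t ^ 2 + v t ^ 2) := by
    intro t ht
    rw [← hA2 t ht, Real.sqrt_sq (hApos t ht).le]
  -- conclusion
  intro t ht
  have hr := hr2pos t ht
  have hder : deriv ψ t = W / (u t ^ 2 + v t ^ 2) := (hψ' t ht).deriv
  have hsW : (0:ℝ) < Real.sqrt W := Real.sqrt_pos.2 hW
  have hsr : 0 < Real.sqrt (u t ^ 2 + v t ^ 2) := Real.sqrt_pos.2 hr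
  have hkey : Real.sqrt W / Real.sqrt (W / (u t ^ 2 + v t ^ 2)) =
      Real.sqrt (u t ^ 2 + v t ^ 2) := by
    rw [Real.sqrt_div hW.le]
    field_simp
  have hb := hB0 t ht
  have ha := hAval t ht
  have hsc := Real.sin_sq_add_cos_sq (ψ t)
  constructor
  · show u t = Real.sqrt W * Real.cos (ψ t) / Real.sqrt (deriv ψ t)
    rw [hder]
    have hu_eq : u t = A t * Real.cos (ψ t) - B t * Real.sin (ψ t) := by
      rw [show A t = u t * Real.cos (ψ t) + v t * Real.sin (ψ t) from rfl,
        show B t = v t * Real.cos (ψ t) - u t * Real.sin (ψ t) from rfl]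
      linear_combination (-(u t)) * hsc
    rw [show Real.sqrt W * Real.cos (ψ t) / Real.sqrt (W / (u t ^ 2 + v t ^ 2)) =
        Real.cos (ψ t) * (Real.sqrt W / Real.sqrt (W / (u t ^ 2 + v t ^ 2))) from by ring,
      hkey]
    conv_lhs => rw [hu_eq]
    rw [hb, ha]
    ring
  · show v t = Real.sqrt W * Real.sin (ψ t) / Real.sqrt (deriv ψ t)
    rw [hder]
    have hv_eq : v t = A t * Real.sin (ψ t) + B t * Real.cos (ψ t) := by
      rw [show A t = u t * Real.cos (ψ t) + v t * Real.sin (ψ t) from rfl,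
        show B t = v t * Real.cos (ψ t) - u t * Real.sin (ψ t) from rfl]
      linear_combination (-(v t)) * hsc
    rw [show Real.sqrt W * Real.sin (ψ t) / Real.sqrt (W / (u t ^ 2 + v t ^ 2)) =
        Real.sin (ψ t) * (Real.sqrt W / Real.sqrt (W / (u t ^ 2 + v t ^ 2))) from by ring,
      hkey]
    conv_lhs => rw [hv_eq]
    rw [hb, ha]
    ring
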